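/- arXiv:2408.15478 — 4 statements merged into one kernel-verified Lean document; each statement's English description precedes it below -/
import Mathlib

section
/- The cactus group J₃ is isomorphic to the free product (ℤ/2ℤ) * (ℤ/2ℤ) of two cyclic groups of order two. -/
/-- Generators of the cactus group `J₃`. -/
inductive CactusGen : Type
  | s12 | s23 | s13
  deriving DecidableEq

open FreeGroup in
/-- Relators of the cactus group `J₃`:
`s₁₂² = s₂₃² = s₁₃² = 1`, `s₁₂·s₁₃ = s₁₃·s₂₃`, `s₂₃·s₁₃ = s₁₃·s₁₂`. -/
def cactusRels : Set (FreeGroup CactusGen) :=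
  { of .s12 * of .s12,
    of .s23 * of .s23,
    of .s13 * of .s13,
    of .s12 * of .s13 * (of .s13 * of .s23)⁻¹,
    of .s23 * of .s13 * (of .s13 * of .s12)⁻¹ }

/-- The cactus group `J₃` as a presented group. -/
abbrev J3 : Type := PresentedGroup cactusRels

def s12 : J3 := PresentedGroup.of .s12
def s23 : J3 := PresentedGroup.of .s23
def s13 : J3 := PresentedGroup.of .s13


abbrev GG := Monoid.Coprod (Multiplicative (ZMod 2)) (Multiplicative (ZMod 2))

def x2 : Multiplicative (ZMod 2) := Multiplicative.ofAdd 1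

lemma x2_sq : x2 * x2 = 1 := by decide

def aa : GG := Monoid.Coprod.inl x2
def bb : GG := Monoid.Coprod.inr x2

lemma aa_sq : aa * aa = 1 := by rw [aa, ← map_mul, x2_sq, map_one]
lemma bb_sq : bb * bb = 1 := by rw [bb, ← map_mul, x2_sq, map_one]

def cactusToG : CactusGen → GG
  | .s12 => aa
  | .s13 => bb
  | .s23 => bb * aa * bb


lemma aa_inv : aa⁻¹ = aa := inv_eq_of_mul_eq_one_right aa_sq
lemma bb_inv : bb⁻¹ = bb := inv_eq_of_mul_eq_one_right bb_sq
lemma aa_mul (y : GG) : aa * (aa * y) = y := by rw [← mul_assoc, aa_sq, one_mul]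
lemma bb_mul (y : GG) : bb * (bb * y) = y := by rw [← mul_assoc, bb_sq, one_mul]

lemma rels_one : ∀ r ∈ cactusRels, FreeGroup.lift cactusToG r = 1 := by
  intro r hr
  rcases hr with h | h | h | h | h <;> subst h <;>
    simp [cactusToG, mul_inv_rev, aa_inv, bb_inv, mul_assoc, aa_mul, bb_mul, aa_sq, bb_sq]

def fJ : J3 →* GG := PresentedGroup.toGroup rels_one

def homOf {H : Type*} [Group H] (x : H) (hx : x * x = 1) : Multiplicative (ZMod 2) →* H where
  toFun n := if n.toAdd = 0 then 1 else x
  map_one' := by simp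
  map_mul' a b := by
    have h2 : ((1 : ZMod 2) + 1) = 0 := by decide
    have hc : ∀ c : Multiplicative (ZMod 2), c.toAdd = 0 ∨ c.toAdd = 1 := by decide
    rcases hc a with ha | ha <;> rcases hc b with hb | hb <;> simp [toAdd_mul, ha, hb, hx, h2]

lemma homOf_x2 {H : Type*} [Group H] (x : H) (hx : x * x = 1) : homOf x hx x2 = x := by
  simp [homOf, (by decide : ¬ x2 = 1)]

lemma rel_one {r : FreeGroup CactusGen} (h : r ∈ cactusRels) :
    PresentedGroup.mk cactusRels r = 1 :=
  (QuotientGroup.eq_one_iff _).mpr (Subgroup.subset_normalClosure h)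

lemma s12_sq : s12 * s12 = 1 := by
  have := rel_one (r := .of .s12 * .of .s12) (by left; rfl)
  simpa [s12, PresentedGroup.of] using this

lemma s13_sq : s13 * s13 = 1 := by
  have := rel_one (r := .of .s13 * .of .s13) (by right; right; left; rfl)
  simpa [s13, PresentedGroup.of] using this

lemma s23_eq : s23 = s13 * s12 * s13 := by
  have := rel_one (r := .of .s23 * .of .s13 * (.of .s13 * .of .s12)⁻¹) (by right;right;right;right;rfl)
  have h : s23 * s13 * (s13 * s12)⁻¹ = 1 := by
    simpa [s12, s13, s23, PresentedGroup.of] using this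
  have h2 : s23 * s13 = s13 * s12 := by
    rwa [mul_inv_eq_one] at h
  calc s23 = s23 * (s13 * s13) := by rw [s13_sq, mul_one]
    _ = (s23 * s13) * s13 := by rw [mul_assoc]
    _ = s13 * s12 * s13 := by rw [h2]

def gJ : GG →* J3 := Monoid.Coprod.lift (homOf s12 s12_sq) (homOf s13 s13_sq)

lemma fJ_of (c : CactusGen) : fJ (PresentedGroup.of c) = cactusToG c :=
  PresentedGroup.toGroup.of rels_one

lemma gJ_aa : gJ aa = s12 := by
  simp [gJ, aa, homOf_x2]

lemma gJ_bb : gJ bb = s13 := by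
  simp [gJ, bb, homOf_x2]

lemma fJ_s12 : fJ s12 = aa := fJ_of .s12
lemma fJ_s13 : fJ s13 = bb := fJ_of .s13

lemma left : gJ.comp fJ = MonoidHom.id J3 := by
  apply PresentedGroup.ext
  intro x
  cases x
  · show gJ (fJ s12) = s12
    rw [show fJ s12 = aa from fJ_of .s12, gJ_aa]
  · show gJ (fJ s23) = s23
    rw [show fJ s23 = bb * aa * bb from fJ_of .s23, map_mul, map_mul, gJ_aa, gJ_bb, ← s23_eq]
  · show gJ (fJ s13) = s13
    rw [show fJ s13 = bb from fJ_of .s13, gJ_bb]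

lemma elem_cases (c : Multiplicative (ZMod 2)) : c = 1 ∨ c = x2 := by revert c; decide

lemma right : fJ.comp gJ = MonoidHom.id GG := by
  apply Monoid.Coprod.hom_ext <;> refine MonoidHom.ext fun c => ?_ <;>
    rcases elem_cases c with h | h <;> subst h <;>
      simp [gJ, Monoid.Coprod.lift_apply_inl, Monoid.Coprod.lift_apply_inr, homOf_x2,
        fJ_s12, fJ_s13, aa, bb]


/-- `J₃` is isomorphic to the free product `(ℤ/2ℤ) ∗ (ℤ/2ℤ)`. -/
theorem J3_iso_freeProduct :
    Nonempty (J3 ≃* Monoid.Coprod (Multiplicative (ZMod 2)) (Multiplicative (ZMod 2))) := by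
  exact ⟨{ toFun := fJ, invFun := gJ,
           left_inv := fun x => congrArg (fun h => DFunLike.coe h x) left ▸ rfl,
           right_inv := fun x => congrArg (fun h => DFunLike.coe h x) right ▸ rfl,
           map_mul' := map_mul fJ }⟩
end

section
/- The subgroup H = J₃^{2} of the cactus group J₃ generated by s₁₂ and s₂₃ is isomorphic to the free product (ℤ/2ℤ) * (ℤ/2ℤ), and hence is isomorphic to J₃ itself. -/
/-- The subgroup `H = J₃^{2}` of `J₃` generated by `s₁₂` and `s₂₃`. -/
def H : Subgroup J3 := Subgroup.closure {s12, s23}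

namespace CactusAux

open DihedralGroup

abbrev D := DihedralGroup 0

def ofInt : ℤ → ZMod 0 := fun k => k
def toInt : ZMod 0 → ℤ := fun k => k

@[simp] lemma ofInt_toInt (i : ZMod 0) : ofInt (toInt i) = i := rfl
@[simp] lemma toInt_ofInt (k : ℤ) : toInt (ofInt k) = k := rfl

/-! ### Basic relations in `J3` -/

lemma mk_rel_eq_one {w : FreeGroup CactusGen} (hw : w ∈ cactusRels) :
    PresentedGroup.mk cactusRels w = 1 :=
  (QuotientGroup.eq_one_iff w).mpr (Subgroup.subset_normalClosure hw)

lemma sq12 : s12 * s12 = 1 := by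
  have := mk_rel_eq_one (w := FreeGroup.of .s12 * FreeGroup.of .s12)
    (by simp [cactusRels])
  rwa [map_mul] at this

lemma sq23 : s23 * s23 = 1 := by
  have := mk_rel_eq_one (w := FreeGroup.of .s23 * FreeGroup.of .s23)
    (by simp [cactusRels])
  rwa [map_mul] at this

lemma sq13 : s13 * s13 = 1 := by
  have := mk_rel_eq_one (w := FreeGroup.of .s13 * FreeGroup.of .s13)
    (by simp [cactusRels])
  rwa [map_mul] at this

lemma inv12 : s12⁻¹ = s12 := inv_eq_of_mul_eq_one_right sq12
lemma inv23 : s23⁻¹ = s23 := inv_eq_of_mul_eq_one_right sq23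
lemma inv13 : s13⁻¹ = s13 := inv_eq_of_mul_eq_one_right sq13

lemma rel5 : s23 * s13 = s13 * s12 := by
  have := mk_rel_eq_one
    (w := FreeGroup.of .s23 * FreeGroup.of .s13 *
      (FreeGroup.of .s13 * FreeGroup.of .s12)⁻¹) (by simp [cactusRels])
  rw [map_mul, map_inv, map_mul, mul_inv_eq_one] at this
  exact this

lemma s13_s12_s13 : s13 * s12 * s13 = s23 := by
  have h := rel5
  calc s13 * s12 * s13 = s23 * s13 * s13 := by rw [h]
    _ = s23 * (s13 * s13) := by rw [mul_assoc]
    _ = s23 := by rw [sq13, mul_one]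

/-- The "translation" element. -/
def u : J3 := s13 * s12

lemma conj_u : s12 * u * s12⁻¹ = u⁻¹ := by
  rw [inv12, u, mul_inv_rev, inv12, inv13]
  calc s12 * (s13 * s12) * s12 = s12 * s13 * (s12 * s12) := by group
    _ = s12 * s13 := by rw [sq12, mul_one]

lemma conj_u_zpow (k : ℤ) : s12 * u ^ k * s12 = u ^ (-k) := by
  have h : (s12 * u * s12⁻¹) ^ k = s12 * u ^ k * s12⁻¹ := conj_zpow
  rw [conj_u, inv_zpow, ← zpow_neg, inv12] at h
  exact h.symm

lemma s12_u_zpow (k : ℤ) : s12 * u ^ k = u ^ (-k) * s12 := by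
  have := conj_u_zpow k
  calc s12 * u ^ k = s12 * u ^ k * (s12 * s12) := by rw [sq12, mul_one]
    _ = (s12 * u ^ k * s12) * s12 := by group
    _ = u ^ (-k) * s12 := by rw [this]

/-! ### The homomorphism `π : J3 →* D` -/

def fD : CactusGen → D
  | .s12 => sr 0
  | .s23 => sr 2
  | .s13 => sr 1

lemma sr_inv (i : ZMod 0) : (sr i : D)⁻¹ = sr i := rfl
lemma r_inv (i : ZMod 0) : (r i : D)⁻¹ = r (-i) := rfl

lemma relsD : ∀ r ∈ cactusRels, FreeGroup.lift fD r = 1 := by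
  intro r hr
  simp only [cactusRels, Set.mem_insert_iff, Set.mem_singleton_iff] at hr
  rcases hr with rfl | rfl | rfl | rfl | rfl <;>
    simp [fD, mul_inv_eq_one, sr_inv, r_inv, mul_inv_rev] <;>
    norm_num

def π : J3 →* D := PresentedGroup.toGroup relsD

@[simp] lemma π_s12 : π s12 = sr 0 := PresentedGroup.toGroup.of relsD
@[simp] lemma π_s23 : π s23 = sr 2 := PresentedGroup.toGroup.of relsD
@[simp] lemma π_s13 : π s13 = sr 1 := PresentedGroup.toGroup.of relsD

/-! ### The homomorphism `ρ : D →* J3` -/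

def ρfun : D → J3
  | .r i => u ^ (-toInt i)
  | .sr i => s12 * u ^ (-toInt i)

@[simp] lemma ρfun_r (i : ZMod 0) : ρfun (r i) = u ^ (-toInt i) := rfl
@[simp] lemma ρfun_sr (i : ZMod 0) : ρfun (sr i) = s12 * u ^ (-toInt i) := rfl

lemma toInt_add (i j : ZMod 0) : toInt (i + j) = toInt i + toInt j := rfl
lemma toInt_sub (i j : ZMod 0) : toInt (i - j) = toInt i - toInt j := rfl

def ρ : D →* J3 := MonoidHom.mk' ρfun (by
  rintro (i | i) (j | j)
  · rw [r_mul_r, ρfun_r, ρfun_r, ρfun_r, toInt_add, ← zpow_add]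
    congr 1
    ring
  · rw [r_mul_sr, ρfun_sr, ρfun_r, ρfun_sr, toInt_sub]
    calc s12 * u ^ (-(toInt j - toInt i))
        = s12 * (u ^ (toInt i) * u ^ (-toInt j)) := by
          rw [← zpow_add]; congr 1; ring
      _ = (s12 * u ^ (toInt i)) * u ^ (-toInt j) := by rw [mul_assoc]
      _ = (u ^ (-toInt i) * s12) * u ^ (-toInt j) := by rw [s12_u_zpow]
      _ = u ^ (-toInt i) * (s12 * u ^ (-toInt j)) := by rw [mul_assoc]
  · rw [sr_mul_r, ρfun_sr, ρfun_sr, ρfun_r, toInt_add]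
    rw [mul_assoc, ← zpow_add]
    congr 2
    ring
  · rw [sr_mul_sr, ρfun_r, ρfun_sr, ρfun_sr, toInt_sub]
    refine Eq.symm ?_
    calc s12 * u ^ (-toInt i) * (s12 * u ^ (-toInt j))
        = (s12 * u ^ (-toInt i) * s12) * u ^ (-toInt j) := by group
      _ = u ^ (toInt i) * u ^ (-toInt j) := by rw [conj_u_zpow, neg_neg]
      _ = u ^ (-(toInt j - toInt i)) := by rw [← zpow_add]; congr 1; ring)

@[simp] lemma ρ_r (i : ZMod 0) : ρ (r i) = u ^ (-toInt i) := rfl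
@[simp] lemma ρ_sr (i : ZMod 0) : ρ (sr i) = s12 * u ^ (-toInt i) := rfl

/-! ### `π` and `ρ` are inverse -/

lemma hρπ : ρ.comp π = MonoidHom.id J3 := by
  apply PresentedGroup.ext
  intro x
  cases x
  · show ρ (π s12) = s12
    rw [π_s12, ρ_sr]
    have h0 : toInt (0 : ZMod 0) = 0 := rfl
    rw [h0, neg_zero, zpow_zero, mul_one]
  · show ρ (π s23) = s23
    rw [π_s23, ρ_sr]
    have h2 : toInt (2 : ZMod 0) = 2 := rfl
    rw [h2, show ((-2 : ℤ)) = -1 + -1 by norm_num, zpow_add, zpow_neg_one, u,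
      mul_inv_rev, inv12, inv13]
    calc s12 * (s12 * s13 * (s12 * s13)) = (s12 * s12) * (s13 * s12 * s13) := by group
      _ = s23 := by rw [sq12, one_mul, s13_s12_s13]
  · show ρ (π s13) = s13
    rw [π_s13, ρ_sr]
    have h1 : toInt (1 : ZMod 0) = 1 := rfl
    rw [h1, zpow_neg_one, u, mul_inv_rev, inv12, inv13]
    calc s12 * (s12 * s13) = (s12 * s12) * s13 := by group
      _ = s13 := by rw [sq12, one_mul]

lemma π_u : π u = r (ofInt (-1)) := by
  rw [u, map_mul, π_s13, π_s12, sr_mul_sr]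
  norm_num
  rfl

lemma r_ofInt_zpow (a : ℤ) : ∀ k : ℤ, (r (ofInt a) : D) ^ k = r (ofInt (a * k)) := by
  intro k
  induction k using Int.induction_on with
  | zero => rw [zpow_zero, mul_zero]; rfl
  | succ n ih =>
      rw [zpow_add_one, ih, r_mul_r]
      congr 1
      show ofInt (a * n + a) = _
      congr 1
      ring
  | pred n ih =>
      rw [zpow_sub_one, ih, show (r (ofInt a) : D)⁻¹ = r (-(ofInt a)) from rfl, r_mul_r]
      show r (ofInt (a * (-(n : ℤ)) + (-a))) = r (ofInt (a * (-(n : ℤ) - 1)))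
      exact congrArg (fun k : ℤ => (r (ofInt k) : D)) (by ring)

lemma hπρ : π.comp ρ = MonoidHom.id D := by
  apply MonoidHom.ext
  rintro (i | i)
  · show π (u ^ (-toInt i)) = r i
    rw [map_zpow, π_u, r_ofInt_zpow]
    norm_num
  · show π (s12 * u ^ (-toInt i)) = sr i
    rw [map_mul, map_zpow, π_u, r_ofInt_zpow, π_s12, sr_mul_r]
    norm_num

/-- The isomorphism `J3 ≃* D`. -/
def e : J3 ≃* D := MonoidHom.toMulEquiv π ρ hρπ hπρ

/-! ### The doubling homomorphism `δ : D →* D` -/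

def δfun : D → D
  | .r i => r (ofInt (2 * toInt i))
  | .sr i => sr (ofInt (2 * toInt i))

@[simp] lemma δfun_r (i : ZMod 0) : δfun (r i) = r (ofInt (2 * toInt i)) := rfl
@[simp] lemma δfun_sr (i : ZMod 0) : δfun (sr i) = sr (ofInt (2 * toInt i)) := rfl

def δ : D →* D := MonoidHom.mk' δfun (by
  rintro (i | i) (j | j)
  · rw [r_mul_r, δfun_r, δfun_r, δfun_r, r_mul_r]
    show r (ofInt (2 * (toInt i + toInt j))) = r (ofInt (2 * toInt i + 2 * toInt j))
    exact congrArg (fun k : ℤ => (r (ofInt k) : D)) (by ring)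
  · rw [r_mul_sr, δfun_sr, δfun_r, δfun_sr, r_mul_sr]
    show sr (ofInt (2 * (toInt j - toInt i))) = sr (ofInt (2 * toInt j - 2 * toInt i))
    exact congrArg (fun k : ℤ => (sr (ofInt k) : D)) (by ring)
  · rw [sr_mul_r, δfun_sr, δfun_sr, δfun_r, sr_mul_r]
    show sr (ofInt (2 * (toInt i + toInt j))) = sr (ofInt (2 * toInt i + 2 * toInt j))
    exact congrArg (fun k : ℤ => (sr (ofInt k) : D)) (by ring)
  · rw [sr_mul_sr, δfun_r, δfun_sr, δfun_sr, sr_mul_sr]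
    show r (ofInt (2 * (toInt j - toInt i))) = r (ofInt (2 * toInt j - 2 * toInt i))
    exact congrArg (fun k : ℤ => (r (ofInt k) : D)) (by ring))

@[simp] lemma δ_r (i : ZMod 0) : δ (r i) = r (ofInt (2 * toInt i)) := rfl
@[simp] lemma δ_sr (i : ZMod 0) : δ (sr i) = sr (ofInt (2 * toInt i)) := rfl

lemma δ_injective : Function.Injective δ := by
  rintro (i | i) (j | j) h
  · rw [δ_r, δ_r] at h
    injection h with h2
    have h3 : 2 * toInt i = 2 * toInt j := h2
    have h4 : toInt i = toInt j := by omega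
    exact congrArg r h4
  · simp at h
  · simp at h
  · rw [δ_sr, δ_sr] at h
    injection h with h2
    have h3 : 2 * toInt i = 2 * toInt j := h2
    have h4 : toInt i = toInt j := by omega
    exact congrArg sr h4

lemma sr0_mul_sr2 : (sr 0 : D) * sr 2 = r (ofInt 2) := by
  rw [sr_mul_sr]
  norm_num
  rfl

lemma δ_range : δ.range = Subgroup.closure {(sr 0 : D), sr 2} := by
  apply le_antisymm
  · rintro x ⟨y, rfl⟩
    have h0 : (sr 0 : D) ∈ Subgroup.closure {(sr 0 : D), sr 2} :=
      Subgroup.subset_closure (by simp)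
    have h2 : (sr 2 : D) ∈ Subgroup.closure {(sr 0 : D), sr 2} :=
      Subgroup.subset_closure (by simp)
    have hr : ∀ i : ZMod 0, (r (ofInt (2 * toInt i)) : D) ∈
        Subgroup.closure {(sr 0 : D), sr 2} := by
      intro i
      have : (r (ofInt (2 * toInt i)) : D) = (sr 0 * sr 2) ^ (toInt i) := by
        rw [sr0_mul_sr2, r_ofInt_zpow]
      rw [this]
      exact zpow_mem (mul_mem h0 h2) _
    rcases y with i | i
    · rw [δ_r]; exact hr i
    · rw [δ_sr]
      have : (sr (ofInt (2 * toInt i)) : D) = sr 0 * r (ofInt (2 * toInt i)) := by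
        rw [sr_mul_r, zero_add]
      rw [this]
      exact mul_mem h0 (hr i)
  · rw [Subgroup.closure_le]
    rintro x hx
    rcases hx with rfl | rfl
    · exact ⟨sr 0, by rw [δ_sr]; norm_num; rfl⟩
    · exact ⟨sr 1, by rw [δ_sr]; norm_num; rfl⟩

/-! ### mapping `H` across `e` -/

lemma e_apply (x : J3) : e x = π x := rfl

lemma map_H : Subgroup.map (e : J3 →* D) H = δ.range := by
  rw [H, MonoidHom.map_closure, δ_range]
  congr 1
  rw [Set.image_insert_eq, Set.image_singleton]
  have h1 : (e : J3 →* D) s12 = sr 0 := π_s12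
  have h2 : (e : J3 →* D) s23 = sr 2 := π_s23
  rw [h1, h2]

/-- `H` is isomorphic to the infinite dihedral group. -/
noncomputable def isoHD : H ≃* D :=
  ((MulEquiv.subgroupMap e H).trans (MulEquiv.subgroupCongr map_H)).trans
    (MonoidHom.ofInjective δ_injective).symm

/-! ### `J3 ≃* (ℤ/2) ∗ (ℤ/2)` -/

abbrev G := Monoid.Coprod (Multiplicative (ZMod 2)) (Multiplicative (ZMod 2))

def g1 : Multiplicative (ZMod 2) := Multiplicative.ofAdd 1

/-- Homomorphism out of `ℤ/2` determined by an element of order dividing 2. -/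
def zmod2Hom {M : Type*} [Monoid M] (x : M) (hx : x * x = 1) :
    Multiplicative (ZMod 2) →* M where
  toFun a := x ^ (Multiplicative.toAdd a).val
  map_one' := by
    show x ^ (0 : ZMod 2).val = 1
    simp
  map_mul' a b := by
    have key : ∀ n : ℕ, x ^ (n % 2) = x ^ n := by
      intro n
      conv_rhs => rw [← Nat.div_add_mod n 2]
      rw [pow_add, pow_mul, pow_two, hx, one_pow, one_mul]
    show x ^ ((Multiplicative.toAdd a) + (Multiplicative.toAdd b)).val = _
    rw [ZMod.val_add, key, pow_add]

@[simp] lemma zmod2Hom_g1 {M : Type*} [Monoid M] (x : M) (hx : x * x = 1) :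
    zmod2Hom x hx g1 = x := by
  show x ^ (Multiplicative.toAdd g1).val = x
  have : (Multiplicative.toAdd g1).val = 1 := rfl
  rw [this, pow_one]

def fG : CactusGen → G
  | .s12 => Monoid.Coprod.inl g1
  | .s23 => Monoid.Coprod.inr g1 * Monoid.Coprod.inl g1 * Monoid.Coprod.inr g1
  | .s13 => Monoid.Coprod.inr g1

lemma relsG : ∀ r ∈ cactusRels, FreeGroup.lift fG r = 1 := by
  have ha : (Monoid.Coprod.inl g1 : G) * Monoid.Coprod.inl g1 = 1 := by
    rw [← map_mul, show g1 * g1 = 1 by decide, map_one]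
  have hb : (Monoid.Coprod.inr g1 : G) * Monoid.Coprod.inr g1 = 1 := by
    rw [← map_mul, show g1 * g1 = 1 by decide, map_one]
  set a : G := Monoid.Coprod.inl g1 with ha'
  set b : G := Monoid.Coprod.inr g1 with hb'
  have hainv : a⁻¹ = a := inv_eq_of_mul_eq_one_right ha
  have hbinv : b⁻¹ = b := inv_eq_of_mul_eq_one_right hb
  have ha2 : ∀ x : G, a * (a * x) = x := by
    intro x; rw [← mul_assoc, ha, one_mul]
  have hb2 : ∀ x : G, b * (b * x) = x := by
    intro x; rw [← mul_assoc, hb, one_mul]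
  intro r hr
  simp only [cactusRels, Set.mem_insert_iff, Set.mem_singleton_iff] at hr
  rcases hr with rfl | rfl | rfl | rfl | rfl <;>
    simp only [map_mul, map_inv, FreeGroup.lift_apply_of, fG, ← ha', ← hb'] <;>
    simp [mul_inv_rev, hainv, hbinv, mul_assoc, ha, hb, ha2, hb2]

def κ : J3 →* G := PresentedGroup.toGroup relsG

@[simp] lemma κ_s12 : κ s12 = Monoid.Coprod.inl g1 := PresentedGroup.toGroup.of relsG
@[simp] lemma κ_s23 :
    κ s23 = Monoid.Coprod.inr g1 * Monoid.Coprod.inl g1 * Monoid.Coprod.inr g1 :=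
  PresentedGroup.toGroup.of relsG
@[simp] lemma κ_s13 : κ s13 = Monoid.Coprod.inr g1 := PresentedGroup.toGroup.of relsG

def lamG : G →* J3 := Monoid.Coprod.lift (zmod2Hom s12 sq12) (zmod2Hom s13 sq13)

lemma two_cases : ∀ x : Multiplicative (ZMod 2), x = 1 ∨ x = g1 := by decide

lemma h_lk : lamG.comp κ = MonoidHom.id J3 := by
  apply PresentedGroup.ext
  intro x
  cases x
  · show lamG (κ s12) = s12
    rw [κ_s12, lamG, Monoid.Coprod.lift_apply_inl, zmod2Hom_g1]
  · show lamG (κ s23) = s23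
    simp only [κ_s23, map_mul, lamG, Monoid.Coprod.lift_apply_inl,
      Monoid.Coprod.lift_apply_inr, zmod2Hom_g1]
    exact s13_s12_s13
  · show lamG (κ s13) = s13
    rw [κ_s13, lamG, Monoid.Coprod.lift_apply_inr, zmod2Hom_g1]

lemma h_kl : κ.comp lamG = MonoidHom.id G := by
  apply Monoid.Coprod.hom_ext
  · apply MonoidHom.ext
    intro x
    rcases two_cases x with rfl | rfl
    · simp
    · show κ (lamG (Monoid.Coprod.inl g1)) = Monoid.Coprod.inl g1
      rw [lamG, Monoid.Coprod.lift_apply_inl, zmod2Hom_g1, κ_s12]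
  · apply MonoidHom.ext
    intro x
    rcases two_cases x with rfl | rfl
    · simp
    · show κ (lamG (Monoid.Coprod.inr g1)) = Monoid.Coprod.inr g1
      rw [lamG, Monoid.Coprod.lift_apply_inr, zmod2Hom_g1, κ_s13]

/-- The isomorphism `J3 ≃* (ℤ/2) ∗ (ℤ/2)`. -/
def jg : J3 ≃* G := MonoidHom.toMulEquiv κ lamG h_lk h_kl

end CactusAux

/-- the subgroup `H = J₃^{2}` generated by `s₁₂` and `s₂₃` is isomorphic
to `(ℤ/2ℤ) ∗ (ℤ/2ℤ)`, hence isomorphic to `J₃` itself. -/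
theorem H_iso_freeProduct_and_J3 :
    Nonempty (H ≃* Monoid.Coprod (Multiplicative (ZMod 2)) (Multiplicative (ZMod 2))) ∧
      Nonempty (H ≃* J3) := by
  constructor
  · exact ⟨CactusAux.isoHD.trans (CactusAux.e.symm.trans CactusAux.jg)⟩
  · exact ⟨CactusAux.isoHD.trans CactusAux.e.symm⟩
end

section
/- The element (s₁₂·s₁₃)³ of the cactus group J₃ has infinite order. -/
/-- Reflections of `ℤ` as permutations: `x ↦ k - x`. -/
def refl' (k : ℤ) : Equiv.Perm ℤ :=
  ⟨fun x => k - x, fun x => k - x, fun x => by ring, fun x => by ring⟩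

/-- Assigning each generator a reflection of `ℤ`. -/
def genMap : CactusGen → Equiv.Perm ℤ
  | .s12 => refl' 0
  | .s23 => refl' 2
  | .s13 => refl' 1

lemma relsOK : ∀ r ∈ cactusRels, FreeGroup.lift genMap r = 1 := by
  intro r hr
  simp only [cactusRels, Set.mem_insert_iff, Set.mem_singleton_iff] at hr
  rcases hr with rfl | rfl | rfl | rfl | rfl <;>
    · simp only [map_mul, map_inv, FreeGroup.lift_apply_of]
      ext x
      simp [genMap, refl', Equiv.Perm.mul_apply, Equiv.Perm.one_apply,
        Equiv.Perm.inv_def, Equiv.symm]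
      try ring

/-- The homomorphism `J₃ →* Perm ℤ`. -/
def φ : J3 →* Equiv.Perm ℤ := PresentedGroup.toGroup relsOK

lemma phi_apply (x : ℤ) : φ (s12 * s13) x = x - 1 := by
  have h : φ (s12 * s13) = genMap .s12 * genMap .s13 := by
    simp [φ, s12, s13, map_mul, PresentedGroup.toGroup.of]
  rw [h]
  simp [genMap, refl', Equiv.Perm.mul_apply]

lemma phi_pow (k : ℕ) (x : ℤ) : ((φ (s12 * s13)) ^ k) x = x - k := by
  induction k generalizing x with
  | zero => simp
  | succ n ih =>
    rw [pow_succ, Equiv.Perm.mul_apply, phi_apply, ih]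
    push_cast
    ring

/-- the element `(s₁₂·s₁₃)³` of `J₃` has infinite order. -/
theorem not_isOfFinOrder : ¬ IsOfFinOrder ((s12 * s13) ^ 3) := by
  intro h
  have h2 : IsOfFinOrder (φ ((s12 * s13) ^ 3)) := φ.isOfFinOrder h
  obtain ⟨n, hn, hpow⟩ := h2.exists_pow_eq_one
  have : ((φ (s12 * s13)) ^ (3 * n)) (0 : ℤ) = 0 := by
    rw [pow_mul]
    rw [map_pow] at hpow
    rw [hpow]
    simp
  rw [phi_pow] at this
  omega
end

section
/- The map φ₀ : L × ℤ → J₃ is injective. -/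
/-- The three labels `[213]`, `[123]`, `[132]`. -/
inductive L : Type
  | v213 | v123 | v132
  deriving DecidableEq

/-- The map `φ₀ : L × ℤ → J₃`. -/
def phi0 : L × ℤ → J3
  | (.v213, k) =>
      if k % 2 = 0 then (s12 * s23) ^ ((3 * k) / 2) * s12 else (s12 * s23) ^ ((3 * k + 1) / 2)
  | (.v123, k) =>
      if k % 2 = 0 then (s12 * s23) ^ ((3 * k) / 2) else (s12 * s23) ^ ((3 * k - 1) / 2) * s12
  | (.v132, k) =>
      if k % 2 = 0 then (s12 * s23) ^ ((3 * k - 2) / 2) * s12 else (s12 * s23) ^ ((3 * k - 1) / 2)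

/-- Reflection of `ℚ` sending `x` to `p - x`. -/
def reflQ (p : ℚ) : Equiv.Perm ℚ :=
  ⟨fun x => p - x, fun x => p - x, fun x => by ring, fun x => by ring⟩

@[simp] lemma reflQ_apply (p x : ℚ) : reflQ p x = p - x := rfl

@[simp] lemma reflQ_inv (p : ℚ) : (reflQ p)⁻¹ = reflQ p := rfl

def gmap : CactusGen → Equiv.Perm ℚ
  | .s12 => reflQ 0
  | .s23 => reflQ 2
  | .s13 => reflQ 1

lemma gmap_rels : ∀ r ∈ cactusRels, FreeGroup.lift gmap r = 1 := by
  intro r hr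
  rcases hr with h | h | h | h | h <;> subst h <;>
    · ext x
      simp [gmap, Equiv.Perm.mul_apply, reflQ_inv]
      try ring

/-- Homomorphism from `J3` to permutations of `ℚ`. -/
noncomputable def F : J3 →* Equiv.Perm ℚ := PresentedGroup.toGroup gmap_rels

@[simp] lemma F_s12 : F s12 = reflQ 0 := PresentedGroup.toGroup.of gmap_rels
@[simp] lemma F_s23 : F s23 = reflQ 2 := PresentedGroup.toGroup.of gmap_rels

lemma F_t : F (s12 * s23) = Equiv.addRight (-2 : ℚ) := by
  ext x
  simp [Equiv.Perm.mul_apply]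
  ring

lemma F_t_pow (n : ℤ) : F ((s12 * s23) ^ n) = Equiv.addRight ((n : ℚ) * (-2)) := by
  rw [map_zpow, F_t, Equiv.zsmul_addRight]
  norm_num [zsmul_eq_mul]

lemma F_t_pow_apply (n : ℤ) (x : ℚ) : F ((s12 * s23) ^ n) x = x - 2 * n := by
  rw [F_t_pow]; simp [Equiv.addRight]; ring

lemma F_t_pow_s12_apply (n : ℤ) (x : ℚ) :
    F ((s12 * s23) ^ n * s12) x = -x - 2 * n := by
  rw [map_mul, Equiv.Perm.mul_apply, F_s12, reflQ_apply, F_t_pow_apply]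
  ring

lemma pow_inj {n m : ℤ} (h : (s12 * s23) ^ n = (s12 * s23) ^ m) : n = m := by
  have h0 := congrArg (fun g => F g (0 : ℚ)) h
  simp only [F_t_pow_apply] at h0
  have : (n : ℚ) = m := by linarith
  exact_mod_cast this

lemma pow_mul_inj {n m : ℤ}
    (h : (s12 * s23) ^ n * s12 = (s12 * s23) ^ m * s12) : n = m :=
  pow_inj (mul_right_cancel h)

lemma ne_mixed (n m : ℤ) : (s12 * s23) ^ n ≠ (s12 * s23) ^ m * s12 := by
  intro h
  have h0 := congrArg (fun g => F g (0 : ℚ)) h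
  have h1 := congrArg (fun g => F g (1 : ℚ)) h
  simp only [F_t_pow_apply, F_t_pow_s12_apply] at h0 h1
  linarith

/-- the map `φ₀ : L × ℤ → J₃` is injective. -/
theorem phi0_injective : Function.Injective phi0 := by
  rintro ⟨l₁, k₁⟩ ⟨l₂, k₂⟩ h
  cases l₁ <;> cases l₂ <;>
    simp only [phi0, Prod.mk.injEq] at h ⊢ <;>
    split_ifs at h with h1 h2 <;>
    first
      | exact (ne_mixed _ _ h).elim
      | exact (ne_mixed _ _ h.symm).elim
      | (have := pow_inj h; exact ⟨by trivial, by omega⟩)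
      | (have := pow_mul_inj h; exact ⟨by trivial, by omega⟩)
      | (have := pow_inj h; omega)
      | (have := pow_mul_inj h; omega)
end
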